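/- Under the hypotheses of the quotient construction (R induced by full row rank C ∈ L^{Ñ×N}, invariance (a,b)∈R ⟹ (F⋉u⋉a, F⋉u⋉b)∈R for all u), let Σ_R be the Boolean system x_R(t+1) = F̃⋉u(t)⋉x_R(t) where F̃ = [F̃_1 … F̃_M] with F̃_k = C ⊙ (F⋉δ_M^k) ⊙ C^T. Then: if input u ∈ Δ_M steers Σ from state a to state a' in one step, the same u steers Σ_R from Ca to Ca' in one step; conversely, if u steers Σ_R from q to q' in one step, then there exist a, a' ∈ Δ_N with Ca = q, Ca' = q', and u steers Σ from a to a' in one step. -/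

import Mathlib

open Matrix

noncomputable section
open scoped Classical

/-- The `i`-th canonical basis vector of length `N`. -/
def canon {N : ℕ} (i : Fin N) : Fin N → ℝ := Pi.single i 1

/-- `Delta N` is the set of canonical basis vectors of length `N`. -/
def Delta (N : ℕ) : Set (Fin N → ℝ) := {v | ∃ i, v = canon i}

/-- A logical matrix: every column is a canonical basis vector. -/
def IsLogical {m : ℕ} {J : Type*} (A : Matrix (Fin m) J ℝ) : Prop :=
  ∀ j : J, ∃ i : Fin m, (fun r => A r j) = canon i

/-- Full row rank for a logical matrix: every canonical vector occurs among the columns. -/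
def FullRowRank {m : ℕ} {J : Type*} (A : Matrix (Fin m) J ℝ) : Prop :=
  ∀ i : Fin m, ∃ j : J, (fun r => A r j) = canon i

/-- Semitensor product `F ⋉ u ⋉ x` for a BCN matrix `F ∈ L^{N×NM}`:
`F` times the Kronecker product `u ⊗ x`. -/
def stp {N M : ℕ} (F : Matrix (Fin N) (Fin M × Fin N) ℝ)
    (u : Fin M → ℝ) (x : Fin N → ℝ) : Fin N → ℝ :=
  F.mulVec (fun p => u p.1 * x p.2)

/-- Boolean product of (0,1)-matrices: `(A ⊙ B) i k = ⋁ j, A i j ∧ B j k`. -/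
def boolProd {I J K : Type*} (A : Matrix I J ℝ) (B : Matrix J K ℝ) : Matrix I K ℝ :=
  fun i k => if ∃ j, A i j = 1 ∧ B j k = 1 then 1 else 0

/-- The `N×N` block `F_k = F ⋉ δ_M^k` of `F`. -/
def blockOf {N M : ℕ} (F : Matrix (Fin N) (Fin M × Fin N) ℝ) (k : Fin M) :
    Matrix (Fin N) (Fin N) ℝ :=
  fun r s => F r (k, s)

/-- The matrix `F̃ = [F̃_1 … F̃_M]` of the quotient system, `F̃_k = C ⊙ F_k ⊙ Cᵀ`. -/
def quotMat {N M Nt : ℕ} (F : Matrix (Fin N) (Fin M × Fin N) ℝ)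
    (C : Matrix (Fin Nt) (Fin N) ℝ) : Matrix (Fin Nt) (Fin M × Fin Nt) ℝ :=
  fun i p => boolProd (boolProd C (blockOf F p.1)) Cᵀ i p.2

lemma canon_inj {N : ℕ} {i j : Fin N} (h : canon i = canon j) : i = j := by
  by_contra hne
  have := congrFun h i
  simp [canon, Pi.single_apply, hne] at this

lemma stp_canon {N M : ℕ} (F : Matrix (Fin N) (Fin M × Fin N) ℝ) (k : Fin M) (j : Fin N) :
    stp F (canon k) (canon j) = fun r => F r (k, j) := by
  have hv : (fun p : Fin M × Fin N => canon k p.1 * canon j p.2) = Pi.single (k, j) 1 := by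
    funext p
    by_cases h1 : p.1 = k <;> by_cases h2 : p.2 = j <;>
      simp [canon, Pi.single_apply, h1, h2, Prod.ext_iff]
  unfold stp
  rw [hv, Matrix.mulVec_single]
  funext r; simp

lemma mulVec_canon {Nt N : ℕ} (C : Matrix (Fin Nt) (Fin N) ℝ) (j : Fin N) :
    C.mulVec (canon j) = fun i => C i j := by
  unfold canon
  rw [Matrix.mulVec_single]
  funext i; simp

/-- one-step transition correspondence between `Σ` and its quotient `Σ_R`. -/
theorem stmt4 {N M Nt : ℕ} (F : Matrix (Fin N) (Fin M × Fin N) ℝ) (hF : IsLogical F)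
    (C : Matrix (Fin Nt) (Fin N) ℝ) (hC : IsLogical C) (hfrr : FullRowRank C)
    (hinv : ∀ a ∈ Delta N, ∀ b ∈ Delta N, C.mulVec a = C.mulVec b →
      ∀ u ∈ Delta M, C.mulVec (stp F u a) = C.mulVec (stp F u b)) :
    (∀ u ∈ Delta M, ∀ a ∈ Delta N, ∀ a' ∈ Delta N, a' = stp F u a →
        C.mulVec a' = stp (quotMat F C) u (C.mulVec a)) ∧
    (∀ u ∈ Delta M, ∀ q ∈ Delta Nt, ∀ q' ∈ Delta Nt, q' = stp (quotMat F C) u q →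
        ∃ a ∈ Delta N, ∃ a' ∈ Delta N,
          C.mulVec a = q ∧ C.mulVec a' = q' ∧ a' = stp F u a) := by
  -- index functions for the columns of F and C
  choose f hf using hF
  choose c hc using hC
  -- entry descriptions
  have hCe : ∀ i j, C i j = if i = c j then (1:ℝ) else 0 := by
    intro i j
    have := congrFun (hc j) i
    simpa [canon, Pi.single_apply] using this
  have hFe : ∀ r p, F r p = if r = f p then (1:ℝ) else 0 := by
    intro r p
    have := congrFun (hf p) r
    simpa [canon, Pi.single_apply] using this
  -- C ⋉ canon j = canon (c j)
  have hCc : ∀ j, C.mulVec (canon j) = canon (c j) := by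
    intro j
    rw [mulVec_canon]
    funext i
    simp [hCe, canon, Pi.single_apply]
  -- stp F (canon k) (canon j) = canon (f (k,j))
  have hFc : ∀ k j, stp F (canon k) (canon j) = canon (f (k, j)) := by
    intro k j
    rw [stp_canon]
    funext r
    simp [hFe, canon, Pi.single_apply]
  -- invariance on indices
  have hcinv : ∀ (k : Fin M) (s s' : Fin N), c s = c s' → c (f (k, s)) = c (f (k, s')) := by
    intro k s s' h
    have := hinv (canon s) ⟨s, rfl⟩ (canon s') ⟨s', rfl⟩
      (by rw [hCc, hCc, h]) (canon k) ⟨k, rfl⟩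
    rw [hFc, hFc, hCc, hCc] at this
    exact canon_inj this
  -- description of a column of the quotient matrix
  have hq : ∀ (k : Fin M) (q : Fin Nt) (s : Fin N), c s = q →
      (fun i => quotMat F C i (k, q)) = canon (c (f (k, s))) := by
    intro k q s hs
    funext i
    show quotMat F C i (k, q) = canon (c (f (k, s))) i
    have key : quotMat F C i (k, q) =
        if ∃ s', (if ∃ j, C i j = 1 ∧ F j (k, s') = 1 then (1:ℝ) else 0) = 1 ∧ C q s' = 1
        then (1:ℝ) else 0 := by
      simp only [quotMat, boolProd, blockOf, Matrix.transpose_apply]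
      split_ifs with h1 h2 h2 <;> simp_all
    have hiff : (∃ s', (if ∃ j, C i j = 1 ∧ F j (k, s') = 1 then (1:ℝ) else 0) = 1 ∧
        C q s' = 1) ↔ i = c (f (k, s)) := by
      constructor
      · rintro ⟨s', h1, h2⟩
        have hqs' : q = c s' := by
          by_contra hne
          rw [hCe, if_neg hne] at h2
          exact one_ne_zero h2.symm
        have hex : ∃ j, C i j = 1 ∧ F j (k, s') = 1 := by
          by_contra hne
          rw [if_neg hne] at h1
          exact one_ne_zero h1.symm
        obtain ⟨j, hj1, hj2⟩ := hex
        have hjf : j = f (k, s') := by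
          by_contra hne
          rw [hFe, if_neg hne] at hj2
          exact one_ne_zero hj2.symm
        have hic : i = c j := by
          by_contra hne
          rw [hCe, if_neg hne] at hj1
          exact one_ne_zero hj1.symm
        rw [hic, hjf, hcinv k s' s (by rw [← hqs', hs])]
      · rintro rfl
        refine ⟨s, ?_, ?_⟩
        · rw [if_pos ⟨f (k, s), by rw [hCe]; simp, by rw [hFe]; simp⟩]
        · rw [hCe, ← hs]; simp
    rw [key]
    simp only [hiff, canon, Pi.single_apply]
  constructor
  · rintro u ⟨k, rfl⟩ a ⟨j, rfl⟩ a' _ ha'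
    subst ha'
    rw [hFc, hCc, hCc, stp_canon (quotMat F C), hq k (c j) j rfl]
  · rintro u ⟨k, rfl⟩ q ⟨p, rfl⟩ q' _ hq'
    obtain ⟨s, hs⟩ := hfrr p
    have hcs : c s = p := canon_inj ((hc s).symm.trans hs)
    refine ⟨canon s, ⟨s, rfl⟩, canon (f (k, s)), ⟨f (k, s), rfl⟩, ?_, ?_, (hFc k s).symm⟩
    · rw [hCc, hcs]
    · rw [hCc, hq', stp_canon (quotMat F C), hq k p s hcs]
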